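/- Let μ be a set partition of [m] into blocks, and let a = (a₁,…,a_ℓ) be a weak composition of m. Let κ_a be the coloring map that replaces elements 1,…,a₁ by color 1, a₁+1,…,a₁+a₂ by color 2, etc. Suppose every block of κ_a(μ) is a set (i.e., no block of μ contains two elements of the same color). Then the number of set partitions γ of [m] with κ_a(γ) = κ_a(μ) equals (a₁!⋯a_ℓ!)/m(κ_a(μ))!, where m(·)! is the product over distinct blocks B of the factorial of the multiplicity of B. -/

import Mathlib

open Finset

/-- The multiset partition obtained by coloring the elements of a set partition `P`
of `[m]` via the coloring map `κ`. -/
def coloredF {m ℓ : ℕ} (κ : Fin m → Fin ℓ) (P : Finpartition (univ : Finset (Fin m))) :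
    Multiset (Multiset (Fin ℓ)) :=
  P.parts.val.map fun B => B.val.map κ

/-- `m(ρ̃)!` : the product over the distinct blocks of a multiset partition of the
factorial of the multiplicity of that block. -/
def mfact {β : Type*} [DecidableEq β] (s : Multiset β) : ℕ :=
  ∏ b ∈ s.toFinset, (s.count b).factorial

section fiberwise
variable {α β γ : Type*}

/-- Fiber-preserving equivalences correspond to families of fiberwise equivalences. -/
def fiberwiseEquiv (f : α → γ) (f' : β → γ) :
    {e : α ≃ β // ∀ x, f' (e x) = f x} ≃ ∀ c, ({x : α // f x = c} ≃ {y : β // f' y = c}) where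
  toFun e c :=
    { toFun := fun x => ⟨e.1 x.1, by rw [e.2]; exact x.2⟩
      invFun := fun y => ⟨e.1.symm y.1, by
        have := e.2 (e.1.symm y.1); rw [e.1.apply_symm_apply] at this; rw [← this]; exact y.2⟩
      left_inv := fun x => Subtype.ext (e.1.symm_apply_apply x.1)
      right_inv := fun y => Subtype.ext (e.1.apply_symm_apply y.1) }
  invFun F :=
    ⟨(Equiv.sigmaFiberEquiv f).symm.trans ((Equiv.sigmaCongrRight F).trans
        (Equiv.sigmaFiberEquiv f')),
      fun x => ((F (f x)) ⟨x, rfl⟩).2⟩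
  left_inv e := Subtype.ext (Equiv.ext fun x => rfl)
  right_inv F := funext fun c => Equiv.ext fun x => Subtype.ext (by
    obtain ⟨x, hx⟩ := x
    subst hx
    rfl)

lemma card_fiberPreservingEquiv [DecidableEq γ] [Fintype γ] [Fintype α] [Fintype β]
    [DecidableEq α] [DecidableEq β] (f : α → γ) (f' : β → γ)
    (h : ∀ c, Fintype.card {x : α // f x = c} = Fintype.card {y : β // f' y = c}) :
    Nat.card {e : α ≃ β // ∀ x, f' (e x) = f x}
      = ∏ c, (Fintype.card {x : α // f x = c}).factorial := by
  rw [Nat.card_congr (fiberwiseEquiv f f'), Nat.card_pi]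
  refine Finset.prod_congr rfl fun c _ => ?_
  rw [Nat.card_eq_fintype_card, Fintype.card_equiv (Fintype.equivOfCardEq (h c))]

lemma card_subtype_finset {δ : Type*} [Fintype δ] [DecidableEq δ] (s : Finset δ)
    (p : δ → Prop) [DecidablePred p] :
    Fintype.card {x : {B // B ∈ s} // p x.val} = (s.filter p).card := by
  rw [Fintype.card_congr (Equiv.subtypeSubtypeEquivSubtypeInter _ _), Fintype.card_subtype]
  congr 1
  ext B
  simp

end fiberwise

section colored
variable {m ℓ : ℕ} (κ : Fin m → Fin ℓ)

/-- The multiset of colors of a block. -/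
def blockType (B : Finset (Fin m)) : Multiset (Fin ℓ) := B.val.map κ

lemma count_coloredF (P : Finpartition (univ : Finset (Fin m))) (t : Multiset (Fin ℓ)) :
    (coloredF κ P).count t = (P.parts.filter fun B => blockType κ B = t).card := by
  rw [coloredF, Multiset.count_map]
  rw [show ((P.parts.filter fun B => blockType κ B = t).card : ℕ)
      = Multiset.card ((P.parts.filter fun B => blockType κ B = t).val) from rfl,
    Finset.filter_val]
  congr 1
  apply Multiset.filter_congr
  intro B _
  exact eq_comm

/-- A permutation of `Fin m` as an order isomorphism of finsets. -/
def permIso (σ : Equiv.Perm (Fin m)) : Finset (Fin m) ≃o Finset (Fin m) where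
  toEquiv := σ.finsetCongr
  map_rel_iff' := by
    intro s t
    simp [Equiv.finsetCongr_apply, Finset.map_subset_map]

/-- The image of a finpartition of `univ` under a permutation. -/
def permPart (σ : Equiv.Perm (Fin m)) (P : Finpartition (univ : Finset (Fin m))) :
    Finpartition (univ : Finset (Fin m)) :=
  (P.map (permIso σ)).copy (by
    simp [permIso, Equiv.finsetCongr_apply, map_univ_equiv])

lemma mem_permPart_parts {σ : Equiv.Perm (Fin m)} {P : Finpartition (univ : Finset (Fin m))}
    {C : Finset (Fin m)} :
    C ∈ (permPart σ P).parts ↔ ∃ B ∈ P.parts, B.map σ.toEmbedding = C := by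
  simp only [permPart, Finpartition.copy, Finpartition.parts_map, Finset.mem_map]
  constructor
  · rintro ⟨B, hB, rfl⟩
    exact ⟨B, hB, rfl⟩
  · rintro ⟨B, hB, rfl⟩
    exact ⟨B, hB, rfl⟩

lemma blockType_map (σ : Equiv.Perm (Fin m)) (hσ : ∀ x, κ (σ x) = κ x) (B : Finset (Fin m)) :
    blockType κ (B.map σ.toEmbedding) = blockType κ B := by
  simp only [blockType, Finset.map_val, Multiset.map_map]
  exact Multiset.map_congr rfl fun x _ => hσ x

lemma coloredF_permPart (σ : Equiv.Perm (Fin m)) (hσ : ∀ x, κ (σ x) = κ x)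
    (P : Finpartition (univ : Finset (Fin m))) :
    coloredF κ (permPart σ P) = coloredF κ P := by
  show ((permPart σ P).parts.val.map fun B => B.val.map κ) = _
  have : (permPart σ P).parts = P.parts.map
      ⟨fun B => B.map σ.toEmbedding, fun B B' h => Finset.map_injective _ h⟩ := by
    ext C
    rw [mem_permPart_parts, Finset.mem_map]
    rfl
  rw [this]
  show (Multiset.map _ (Multiset.map _ P.parts.val)) = _
  rw [Multiset.map_map]
  exact Multiset.map_congr rfl fun B _ => blockType_map κ σ hσ B

lemma exists_unique_pick {B C : Finset (Fin m)} (hB : (blockType κ B).Nodup)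
    (h : blockType κ C = blockType κ B) {i : Fin m} (hi : i ∈ B) :
    ∃! j, j ∈ C ∧ κ j = κ i := by
  have hmem : κ i ∈ blockType κ C := by
    rw [h]
    exact Multiset.mem_map_of_mem _ (Eq.mpr Finset.mem_val hi)
  obtain ⟨j, hj, hji⟩ := Multiset.mem_map.1 hmem
  refine ⟨j, ⟨Eq.mp Finset.mem_val hj, hji⟩, ?_⟩
  rintro j' ⟨hj', hj'i⟩
  have hCnodup : (blockType κ C).Nodup := h ▸ hB
  exact Multiset.inj_on_of_nodup_map hCnodup j' (Eq.mpr Finset.mem_val hj') j hj (by rw [hj'i, hji])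

variable {P Q : Finpartition (univ : Finset (Fin m))}

/-- Reconstruct a map `Fin m → Fin m` from a type-preserving equivalence of blocks. -/
def recon (hbP : ∀ B ∈ P.parts, (blockType κ B).Nodup)
    (e : {B // B ∈ P.parts} ≃ {B // B ∈ Q.parts})
    (he : ∀ B, blockType κ (e B).val = blockType κ B.val) : Fin m → Fin m :=
  fun i => Finset.choose (fun j => κ j = κ i) (e ⟨P.part i, P.part_mem.2 (mem_univ i)⟩).val
    (exists_unique_pick κ (hbP _ (P.part_mem.2 (mem_univ i)))
      (he ⟨P.part i, P.part_mem.2 (mem_univ i)⟩) (P.mem_part (mem_univ i)))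

lemma recon_mem (hbP : ∀ B ∈ P.parts, (blockType κ B).Nodup)
    (e : {B // B ∈ P.parts} ≃ {B // B ∈ Q.parts})
    (he : ∀ B, blockType κ (e B).val = blockType κ B.val) (i : Fin m) :
    recon κ hbP e he i ∈ (e ⟨P.part i, P.part_mem.2 (mem_univ i)⟩).val :=
  Finset.choose_mem _ _ _

lemma kappa_recon (hbP : ∀ B ∈ P.parts, (blockType κ B).Nodup)
    (e : {B // B ∈ P.parts} ≃ {B // B ∈ Q.parts})
    (he : ∀ B, blockType κ (e B).val = blockType κ B.val) (i : Fin m) :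
    κ (recon κ hbP e he i) = κ i :=
  Finset.choose_property (fun j => κ j = κ i) _ _

/-- The reconstructed value is determined by its block and color. -/
lemma recon_eq_of (hbP : ∀ B ∈ P.parts, (blockType κ B).Nodup)
    (e : {B // B ∈ P.parts} ≃ {B // B ∈ Q.parts})
    (he : ∀ B, blockType κ (e B).val = blockType κ B.val) (i j : Fin m)
    (hj : j ∈ (e ⟨P.part i, P.part_mem.2 (mem_univ i)⟩).val) (hκj : κ j = κ i) :
    recon κ hbP e he i = j := by
  have h1 := recon_mem κ hbP e he i
  have h2 := kappa_recon κ hbP e he i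
  have nodup : (blockType κ (e ⟨P.part i, P.part_mem.2 (mem_univ i)⟩).val).Nodup := by
    rw [he]
    exact hbP _ (P.part_mem.2 (mem_univ i))
  exact Multiset.inj_on_of_nodup_map nodup _ (Eq.mpr Finset.mem_val h1) _ (Eq.mpr Finset.mem_val hj)
    (by rw [h2, hκj])

lemma recon_recon (hbP : ∀ B ∈ P.parts, (blockType κ B).Nodup)
    (hbQ : ∀ B ∈ Q.parts, (blockType κ B).Nodup)
    (e : {B // B ∈ P.parts} ≃ {B // B ∈ Q.parts})
    (he : ∀ B, blockType κ (e B).val = blockType κ B.val)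
    (he' : ∀ C, blockType κ (e.symm C).val = blockType κ C.val) (i : Fin m) :
    recon κ hbQ e.symm he' (recon κ hbP e he i) = i := by
  set B : {B // B ∈ P.parts} := ⟨P.part i, P.part_mem.2 (mem_univ i)⟩ with hB
  set j := recon κ hbP e he i with hjdef
  have hj : j ∈ (e B).val := recon_mem κ hbP e he i
  have hQpart : (⟨Q.part j, Q.part_mem.2 (mem_univ j)⟩ : {B // B ∈ Q.parts}) = e B :=
    Subtype.ext (Q.part_eq_of_mem (e B).2 hj)
  have h1 := recon_mem κ hbQ e.symm he' j
  rw [hQpart, Equiv.symm_apply_apply] at h1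
  -- h1 : recon κ hbQ e.symm he' j ∈ B.val = P.part i
  have h2 : κ (recon κ hbQ e.symm he' j) = κ i :=
    (kappa_recon κ hbQ e.symm he' j).trans (kappa_recon κ hbP e he i)
  exact Multiset.inj_on_of_nodup_map (hbP _ (P.part_mem.2 (mem_univ i))) _
    (Eq.mpr Finset.mem_val h1) _ (Eq.mpr Finset.mem_val (P.mem_part (mem_univ i))) h2

/-- Reconstruct a permutation from a type-preserving equivalence of blocks. -/
def reconPerm (hbP : ∀ B ∈ P.parts, (blockType κ B).Nodup)
    (hbQ : ∀ B ∈ Q.parts, (blockType κ B).Nodup)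
    (e : {B // B ∈ P.parts} ≃ {B // B ∈ Q.parts})
    (he : ∀ B, blockType κ (e B).val = blockType κ B.val)
    (he' : ∀ C, blockType κ (e.symm C).val = blockType κ C.val) : Equiv.Perm (Fin m) where
  toFun := recon κ hbP e he
  invFun := recon κ hbQ e.symm he'
  left_inv := recon_recon κ hbP hbQ e he he'
  right_inv := recon_recon κ hbQ hbP e.symm he' he

lemma map_reconPerm_block (hbP : ∀ B ∈ P.parts, (blockType κ B).Nodup)
    (hbQ : ∀ B ∈ Q.parts, (blockType κ B).Nodup)
    (e : {B // B ∈ P.parts} ≃ {B // B ∈ Q.parts})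
    (he : ∀ B, blockType κ (e B).val = blockType κ B.val)
    (he' : ∀ C, blockType κ (e.symm C).val = blockType κ C.val)
    (B : Finset (Fin m)) (hB : B ∈ P.parts) :
    B.map (reconPerm κ hbP hbQ e he he').toEmbedding = (e ⟨B, hB⟩).val := by
  apply Finset.eq_of_subset_of_card_le
  · intro j hj
    obtain ⟨i, hi, rfl⟩ := Finset.mem_map.1 hj
    have hpart : (⟨P.part i, P.part_mem.2 (mem_univ i)⟩ : {B // B ∈ P.parts}) = ⟨B, hB⟩ :=
      Subtype.ext (P.part_eq_of_mem hB hi)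
    have hmem := recon_mem κ hbP e he i
    rw [hpart] at hmem
    exact hmem
  · have hcards : ((e ⟨B, hB⟩).val).card = B.card := by
      have h := congrArg Multiset.card (he ⟨B, hB⟩)
      simpa [blockType] using h
    rw [Finset.card_map, hcards]

lemma permPart_reconPerm (hbP : ∀ B ∈ P.parts, (blockType κ B).Nodup)
    (hbQ : ∀ B ∈ Q.parts, (blockType κ B).Nodup)
    (e : {B // B ∈ P.parts} ≃ {B // B ∈ Q.parts})
    (he : ∀ B, blockType κ (e B).val = blockType κ B.val)
    (he' : ∀ C, blockType κ (e.symm C).val = blockType κ C.val) :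
    permPart (reconPerm κ hbP hbQ e he he') P = Q := by
  apply Finpartition.ext
  ext C
  rw [mem_permPart_parts]
  constructor
  · rintro ⟨B, hB, rfl⟩
    rw [map_reconPerm_block κ hbP hbQ e he he' B hB]
    exact (e ⟨B, hB⟩).2
  · intro hC
    refine ⟨(e.symm ⟨C, hC⟩).val, (e.symm ⟨C, hC⟩).2, ?_⟩
    rw [map_reconPerm_block κ hbP hbQ e he he' _ (e.symm ⟨C, hC⟩).2]
    rw [Subtype.coe_eta, Equiv.apply_symm_apply]

/-- The block equivalence induced by a permutation mapping `P` to `Q`. -/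
def blockEquivOf (σ : Equiv.Perm (Fin m)) (hQ : permPart σ P = Q) :
    {B // B ∈ P.parts} ≃ {B // B ∈ Q.parts} :=
  σ.finsetCongr.subtypeEquiv (fun B => by
    rw [← hQ, Equiv.finsetCongr_apply, mem_permPart_parts]
    constructor
    · intro h
      exact ⟨B, h, rfl⟩
    · rintro ⟨B', hB', hmap⟩
      rwa [← Finset.map_injective σ.toEmbedding hmap])

end colored

section assembly
variable {m ℓ : ℕ} (κ : Fin m → Fin ℓ) {P Q : Finpartition (univ : Finset (Fin m))}

lemma he'_of (e : {B // B ∈ P.parts} ≃ {B // B ∈ Q.parts})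
    (he : ∀ B, blockType κ (e B).val = blockType κ B.val) :
    ∀ C, blockType κ (e.symm C).val = blockType κ C.val := fun C => by
  have h := he (e.symm C)
  rw [Equiv.apply_symm_apply] at h
  exact h.symm

lemma hbQ_of (hbP : ∀ B ∈ P.parts, (blockType κ B).Nodup)
    (e : {B // B ∈ P.parts} ≃ {B // B ∈ Q.parts})
    (he : ∀ B, blockType κ (e B).val = blockType κ B.val) :
    ∀ C ∈ Q.parts, (blockType κ C).Nodup := fun C hC => by
  have h := he (e.symm ⟨C, hC⟩)
  rw [Equiv.apply_symm_apply] at h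
  rw [show blockType κ C = blockType κ (e.symm ⟨C, hC⟩).val from h]
  exact hbP _ (e.symm ⟨C, hC⟩).2

/-- The fiber of the orbit map over `Q` is equivalent to type-preserving block equivalences. -/
def fibEquiv (hbP : ∀ B ∈ P.parts, (blockType κ B).Nodup) :
    {σ : Equiv.Perm (Fin m) // (∀ x, κ (σ x) = κ x) ∧ permPart σ P = Q} ≃
    {e : {B // B ∈ P.parts} ≃ {B // B ∈ Q.parts} //
      ∀ B, blockType κ (e B).val = blockType κ B.val} where
  toFun s := ⟨blockEquivOf s.1 s.2.2, fun B => blockType_map κ s.1 s.2.1 B.val⟩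
  invFun E :=
    ⟨reconPerm κ hbP (hbQ_of κ hbP E.1 E.2) E.1 E.2 (he'_of κ E.1 E.2),
      fun i => kappa_recon κ hbP E.1 E.2 i,
      permPart_reconPerm κ hbP (hbQ_of κ hbP E.1 E.2) E.1 E.2 (he'_of κ E.1 E.2)⟩
  left_inv s := Subtype.ext (Equiv.ext fun i =>
    recon_eq_of κ hbP (blockEquivOf s.1 s.2.2) (fun B => blockType_map κ s.1 s.2.1 B.val) i
      (s.1 i) (Finset.mem_map_of_mem _ (P.mem_part (mem_univ i))) (s.2.1 i))
  right_inv E := Subtype.ext (Equiv.ext fun B => Subtype.ext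
    ((map_reconPerm_block κ hbP (hbQ_of κ hbP E.1 E.2) E.1 E.2 (he'_of κ E.1 E.2)
        B.val B.2).trans (by rw [Subtype.coe_eta])))

lemma card_BE (hQc : coloredF κ Q = coloredF κ P) :
    Nat.card {e : {B // B ∈ P.parts} ≃ {B // B ∈ Q.parts} //
      ∀ B, blockType κ (e B).val = blockType κ B.val} = mfact (coloredF κ P) := by
  have fmem : ∀ (B : {B // B ∈ P.parts}), blockType κ B.val ∈ (coloredF κ P).toFinset :=
    fun B => by
      rw [Multiset.mem_toFinset]
      exact Multiset.mem_map_of_mem _ (Eq.mpr Finset.mem_val B.2)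
  have f'mem : ∀ (C : {B // B ∈ Q.parts}), blockType κ C.val ∈ (coloredF κ P).toFinset :=
    fun C => by
      rw [Multiset.mem_toFinset, ← hQc]
      exact Multiset.mem_map_of_mem _ (Eq.mpr Finset.mem_val C.2)
  set f : {B // B ∈ P.parts} → {t // t ∈ (coloredF κ P).toFinset} :=
    fun B => ⟨blockType κ B.val, fmem B⟩ with hf
  set f' : {B // B ∈ Q.parts} → {t // t ∈ (coloredF κ P).toFinset} :=
    fun C => ⟨blockType κ C.val, f'mem C⟩ with hf'
  have hPc : ∀ c : {t // t ∈ (coloredF κ P).toFinset},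
      Fintype.card {x : {B // B ∈ P.parts} // f x = c} = (coloredF κ P).count c.val := fun c => by
    rw [Fintype.card_congr (Equiv.subtypeEquivRight (fun x =>
      ⟨fun h => congrArg Subtype.val h, fun h => Subtype.ext h⟩)),
      card_subtype_finset P.parts (fun B => blockType κ B = c.val), count_coloredF]
  have hQcard : ∀ c : {t // t ∈ (coloredF κ P).toFinset},
      Fintype.card {y : {B // B ∈ Q.parts} // f' y = c} = (coloredF κ P).count c.val := fun c => by
    rw [Fintype.card_congr (Equiv.subtypeEquivRight (fun x =>
      ⟨fun h => congrArg Subtype.val h, fun h => Subtype.ext h⟩)),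
      card_subtype_finset Q.parts (fun B => blockType κ B = c.val), ← count_coloredF, hQc]
  have hcards : ∀ c, Fintype.card {x : {B // B ∈ P.parts} // f x = c}
      = Fintype.card {y : {B // B ∈ Q.parts} // f' y = c} := fun c => by
    rw [hPc c, hQcard c]
  rw [Nat.card_congr (Equiv.subtypeEquivRight
      (p := fun e : {B // B ∈ P.parts} ≃ {B // B ∈ Q.parts} =>
        ∀ B, blockType κ (e B).val = blockType κ B.val)
      (q := fun e => ∀ x, f' (e x) = f x) (fun e =>
    ⟨fun h x => Subtype.ext (h x), fun h B => congrArg Subtype.val (h B)⟩)),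
    card_fiberPreservingEquiv f f' hcards, mfact]
  rw [← Finset.prod_coe_sort (coloredF κ P).toFinset
    fun t => ((coloredF κ P).count t).factorial]
  exact Finset.prod_congr rfl fun c _ => by rw [hPc c]

instance finpartitionDecEq : DecidableEq (Finpartition (univ : Finset (Fin m))) := fun P Q =>
  decidable_of_iff (P.parts = Q.parts) ⟨Finpartition.ext, fun h => by rw [h]⟩

end assembly

/-- If `κ` is the coloring map of a weak composition `a` of `m`
(a monotone map `Fin m → Fin ℓ`, whose fibers have the sizes `a₁, …, a_ℓ`), and every
block of the colored partition `κ(μ)` is a set (no block of `μ` has two elements of the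
same color), then the number of set partitions `γ` of `[m]` with `κ(γ) = κ(μ)` is
`(a₁! ⋯ a_ℓ!) / m(κ(μ))!`. -/
theorem stmt0 {m ℓ : ℕ} (κ : Fin m → Fin ℓ) (hκ : Monotone κ)
    (P : Finpartition (univ : Finset (Fin m)))
    (hblocks : ∀ B ∈ P.parts, Set.InjOn κ ↑B) :
    Nat.card {Q : Finpartition (univ : Finset (Fin m)) // coloredF κ Q = coloredF κ P} *
      mfact (coloredF κ P)
      = ∏ c : Fin ℓ, ((univ.filter fun i => κ i = c).card).factorial := by
  have hbP : ∀ B ∈ P.parts, (blockType κ B).Nodup := fun B hB =>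
    (Multiset.nodup_map_iff_inj_on B.nodup).2 fun x hx y hy hxy =>
      hblocks B hB (Finset.mem_coe.2 (Eq.mp Finset.mem_val hx))
        (Finset.mem_coe.2 (Eq.mp Finset.mem_val hy)) hxy
  set S : Finset (Equiv.Perm (Fin m)) := univ.filter fun σ => ∀ x, κ (σ x) = κ x with hS
  set T : Finset (Finpartition (univ : Finset (Fin m))) :=
    univ.filter fun Q => coloredF κ Q = coloredF κ P with hT
  have hmap : ∀ σ ∈ S, permPart σ P ∈ T := fun σ hσ =>
    mem_filter.2 ⟨mem_univ _, coloredF_permPart κ σ ((mem_filter.1 hσ).2) P⟩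
  have hsum := Finset.card_eq_sum_card_fiberwise hmap
  have hfib : ∀ Q ∈ T, (S.filter fun σ => permPart σ P = Q).card = mfact (coloredF κ P) := by
    intro Q hQ
    have hQc : coloredF κ Q = coloredF κ P := (mem_filter.1 hQ).2
    have hfil : (S.filter fun σ => permPart σ P = Q)
        = univ.filter fun σ => (∀ x, κ (σ x) = κ x) ∧ permPart σ P = Q := by
      rw [hS, Finset.filter_filter]
    rw [hfil, ← Fintype.card_subtype, ← Nat.card_eq_fintype_card,
      Nat.card_congr (fibEquiv κ hbP), card_BE κ hQc]
  have hScard : S.card = ∏ c : Fin ℓ, ((univ.filter fun i => κ i = c).card).factorial := by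
    rw [hS, ← Fintype.card_subtype, ← Nat.card_eq_fintype_card]
    have h := card_fiberPreservingEquiv (α := Fin m) (β := Fin m) κ κ (fun c => rfl)
    rw [show Nat.card {σ : Equiv.Perm (Fin m) // ∀ x, κ (σ x) = κ x}
        = ∏ c : Fin ℓ, (Fintype.card {x : Fin m // κ x = c}).factorial from h]
    exact Finset.prod_congr rfl fun c _ => by rw [Fintype.card_subtype]
  have hN : Nat.card {Q : Finpartition (univ : Finset (Fin m)) // coloredF κ Q = coloredF κ P}
      = T.card := by
    rw [Nat.card_eq_fintype_card, hT, ← Fintype.card_subtype]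
  rw [hN, ← hScard, hsum, Finset.sum_congr rfl hfib, Finset.sum_const, smul_eq_mul]
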